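/- For a smooth solution y of the autonomous ODE y' = R(y) with R smooth, the two-stage update y* = yⁿ + (Δt/2)R(yⁿ) + (Δt²/8)(R'·R)(yⁿ), y^{n+1} = yⁿ + Δt·R(yⁿ) + (Δt²/6)[(R'·R)(yⁿ) + 2(R'·R)(y*)] agrees with the exact solution at time tⁿ+Δt up to O(Δt⁵), i.e. the local truncation error is of order Δt⁵. -/

import Mathlib

open Filter Asymptotics Set

theorem step_bigO (f f' : ℝ → ℝ) (n : ℕ) (h0 : f 0 = 0)
    (hd : ∀ t, HasDerivAt f (f' t) t)
    (hO : f' =O[nhds 0] fun t => t ^ n) :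
    f =O[nhds 0] (fun t => t ^ (n + 1)) := by
  obtain ⟨C, hC0, hC⟩ := hO.exists_nonneg
  have hev : ∀ᶠ t in nhds (0:ℝ), ‖f' t‖ ≤ C * ‖t ^ n‖ := hC.bound
  rw [Metric.eventually_nhds_iff] at hev
  obtain ⟨δ, hδ, hb⟩ := hev
  rw [isBigO_iff]
  refine ⟨C, ?_⟩
  rw [Metric.eventually_nhds_iff]
  refine ⟨δ, hδ, fun {t} ht => ?_⟩
  have habs : |t| < δ := by simpa [Real.dist_eq] using ht
  have key : ∀ s : ℝ, |s| ≤ |t| → ‖f' s‖ ≤ C * |t| ^ n := by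
    intro s hs
    have h1 : ‖f' s‖ ≤ C * ‖s ^ n‖ := hb (by simpa [Real.dist_eq] using lt_of_le_of_lt hs habs)
    calc ‖f' s‖ ≤ C * ‖s ^ n‖ := h1
      _ = C * |s| ^ n := by rw [norm_pow, Real.norm_eq_abs]
      _ ≤ C * |t| ^ n := by
          exact mul_le_mul_of_nonneg_left (pow_le_pow_left₀ (abs_nonneg s) hs n) hC0
  have hrhs : ‖t ^ (n+1)‖ = |t| ^ n * |t| := by
    rw [norm_pow, Real.norm_eq_abs, pow_succ]
  rcases le_total 0 t with htpos | htneg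
  · have hmvt := norm_image_sub_le_of_norm_deriv_le_segment' (f := f) (f' := f')
      (a := 0) (b := t) (C := C * |t| ^ n)
      (fun x _ => (hd x).hasDerivWithinAt)
      (fun x hx => key x (by
        rw [abs_of_nonneg hx.1, abs_of_nonneg htpos]; exact le_of_lt hx.2))
      t (right_mem_Icc.mpr htpos)
    rw [h0, sub_zero, sub_zero] at hmvt
    calc ‖f t‖ ≤ C * |t| ^ n * t := hmvt
      _ ≤ C * ‖t ^ (n+1)‖ := by
          rw [hrhs, ← mul_assoc]
          exact mul_le_mul_of_nonneg_left (le_abs_self t)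
            (mul_nonneg hC0 (pow_nonneg (abs_nonneg t) n))
  · have hmvt := norm_image_sub_le_of_norm_deriv_le_segment' (f := f) (f' := f')
      (a := t) (b := 0) (C := C * |t| ^ n)
      (fun x _ => (hd x).hasDerivWithinAt)
      (fun x hx => key x (by
        rw [abs_of_nonpos (le_of_lt hx.2), abs_of_nonpos htneg]; linarith [hx.1]))
      0 (right_mem_Icc.mpr htneg)
    rw [h0] at hmvt
    have : ‖f t‖ ≤ C * |t| ^ n * (0 - t) := by
      calc ‖f t‖ = ‖(0:ℝ) - f t‖ := by rw [zero_sub, norm_neg]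
        _ ≤ C * |t| ^ n * (0 - t) := hmvt
    calc ‖f t‖ ≤ C * |t| ^ n * (0 - t) := this
      _ ≤ C * ‖t ^ (n+1)‖ := by
          rw [hrhs, ← mul_assoc, zero_sub]
          exact mul_le_mul_of_nonneg_left (neg_le_abs t)
            (mul_nonneg hC0 (pow_nonneg (abs_nonneg t) n))

theorem chain_bigO (E E1 E2 E3 ψ χ g3 : ℝ → ℝ)
    (hg3 : Continuous g3)
    (hE : ∀ t, HasDerivAt E (E1 t) t) (hE1 : ∀ t, HasDerivAt E1 (E2 t) t)
    (hE2 : ∀ t, HasDerivAt E2 (E3 t) t)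
    (hE3eq : ∀ t, E3 t = ψ t - t ^ 2 / 3 * g3 t)
    (hψ : ∀ t, HasDerivAt ψ (χ t - 2 * (t * g3 t)) t)
    (hχ : DifferentiableAt ℝ χ 0)
    (hE0 : E 0 = 0) (hE10 : E1 0 = 0) (hE20 : E2 0 = 0) (hψ0 : ψ 0 = 0)
    (hχ0 : χ 0 = 0) :
    E =O[nhds 0] fun t => t ^ 5 := by
  have hg3O : g3 =O[nhds 0] (fun _ : ℝ => (1:ℝ)) := (hg3.tendsto 0).isBigO_one ℝ
  have hχO : χ =O[nhds 0] fun t => t ^ 1 := by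
    have h := hχ.hasFDerivAt.isBigO_sub
    simp only [hχ0, sub_zero] at h
    simpa [pow_one] using h
  have hg3mul : (fun t : ℝ => t * g3 t) =O[nhds 0] fun t => t ^ 1 := by
    have h := (isBigO_refl (fun t : ℝ => t) (nhds 0)).mul hg3O
    simpa [pow_one] using h
  have hψdO : (fun t => χ t - 2 * (t * g3 t)) =O[nhds 0] fun t => t ^ 1 :=
    hχO.sub (hg3mul.const_mul_left 2)
  have hψO : ψ =O[nhds 0] fun t => t ^ 2 := step_bigO ψ _ 1 hψ0 hψ hψdO
  have ht2g3 : (fun t : ℝ => t ^ 2 / 3 * g3 t) =O[nhds 0] fun t => t ^ 2 := by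
    have h := ((isBigO_refl (fun t : ℝ => t ^ 2) (nhds 0)).mul hg3O).const_mul_left (1/3)
    refine (h.congr_left fun t => by ring).congr_right fun t => by ring
  have hE3O : E3 =O[nhds 0] fun t => t ^ 2 :=
    (hψO.sub ht2g3).congr_left fun t => (hE3eq t).symm
  have hE2O : E2 =O[nhds 0] fun t => t ^ 3 := step_bigO E2 E3 2 hE20 hE2 hE3O
  have hE1O : E1 =O[nhds 0] fun t => t ^ 4 := step_bigO E1 E2 3 hE10 hE1 hE2O
  exact step_bigO E E1 4 hE0 hE hE1O

noncomputable section AuxDefs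

/-- first intermediate stage -/
def zA (R : ℝ → ℝ) (a t : ℝ) : ℝ := a + t / 2 * R a + t ^ 2 / 8 * (deriv R a * R a)

/-- R'·R -/
def f1A (R : ℝ → ℝ) (x : ℝ) : ℝ := deriv R x * R x

/-- derivative of the stage -/
def zpA (R : ℝ → ℝ) (a t : ℝ) : ℝ := R a / 2 + t / 4 * (deriv R a * R a)

def gA (R : ℝ → ℝ) (a t : ℝ) : ℝ := f1A R (zA R a t)
def g1A (R : ℝ → ℝ) (a t : ℝ) : ℝ := deriv (f1A R) (zA R a t) * zpA R a t
def g2A (R : ℝ → ℝ) (a t : ℝ) : ℝ :=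
  deriv (deriv (f1A R)) (zA R a t) * zpA R a t * zpA R a t +
    deriv (f1A R) (zA R a t) * (deriv R a * R a / 4)
def g3A (R : ℝ → ℝ) (a t : ℝ) : ℝ :=
  deriv (deriv (deriv (f1A R))) (zA R a t) * zpA R a t ^ 3 +
    3 * (deriv R a * R a / 4) * (deriv (deriv (f1A R)) (zA R a t) * zpA R a t)

def E1A (R y : ℝ → ℝ) (tn t : ℝ) : ℝ :=
  R (y (tn + t)) -
    (R (y tn) + t / 3 * (deriv R (y tn) * R (y tn) + 2 * gA R (y tn) t) +
      t ^ 2 / 3 * g1A R (y tn) t)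

def E2A (R y : ℝ → ℝ) (tn t : ℝ) : ℝ :=
  f1A R (y (tn + t)) -
    ((deriv R (y tn) * R (y tn) + 2 * gA R (y tn) t) / 3 + 4 * t / 3 * g1A R (y tn) t +
      t ^ 2 / 3 * g2A R (y tn) t)

def psiA (R y : ℝ → ℝ) (tn t : ℝ) : ℝ :=
  deriv (f1A R) (y (tn + t)) * R (y (tn + t)) -
    (2 * g1A R (y tn) t + 2 * t * g2A R (y tn) t)

def E3A (R y : ℝ → ℝ) (tn t : ℝ) : ℝ := psiA R y tn t - t ^ 2 / 3 * g3A R (y tn) t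

def chiA (R y : ℝ → ℝ) (tn t : ℝ) : ℝ :=
  deriv (deriv (f1A R)) (y (tn + t)) * R (y (tn + t)) * R (y (tn + t)) +
    deriv (f1A R) (y (tn + t)) * (deriv R (y (tn + t)) * R (y (tn + t))) -
      4 * g2A R (y tn) t

end AuxDefs

/-- For a smooth solution y of y' = R(y), the two-stage fourth-order update has
local truncation error O(Δt⁵). -/
theorem stmt_2 (R : ℝ → ℝ) (hR : ContDiff ℝ 4 R) (y : ℝ → ℝ) (tn : ℝ)
    (hy : ∀ t, HasDerivAt y (R (y t)) t) :
    (fun Δt : ℝ =>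
        y (tn + Δt) -
          (y tn + Δt * R (y tn) + Δt ^ 2 / 6 *
            (deriv R (y tn) * R (y tn) +
              2 * (deriv R (y tn + Δt / 2 * R (y tn) +
                      Δt ^ 2 / 8 * (deriv R (y tn) * R (y tn))) *
                   R (y tn + Δt / 2 * R (y tn) +
                      Δt ^ 2 / 8 * (deriv R (y tn) * R (y tn)))))))
      =O[nhds 0] (fun Δt : ℝ => Δt ^ 5) := by
  -- smoothness facts
  have hR3 : ContDiff ℝ 3 (deriv R) := by
    have h : ContDiff ℝ (3 + 1) R := by norm_num at hR ⊢; exact hR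
    exact (contDiff_succ_iff_deriv.mp h).2.2
  have hf13 : ContDiff ℝ 3 (f1A R) := hR3.mul (hR.of_le (by norm_num))
  have hp12 : ContDiff ℝ 2 (deriv (f1A R)) := by
    have h : ContDiff ℝ (2 + 1) (f1A R) := by norm_num at hf13 ⊢; exact hf13
    exact (contDiff_succ_iff_deriv.mp h).2.2
  have hp21 : ContDiff ℝ 1 (deriv (deriv (f1A R))) := by
    have h : ContDiff ℝ (1 + 1) (deriv (f1A R)) := by norm_num at hp12 ⊢; exact hp12
    exact (contDiff_succ_iff_deriv.mp h).2.2
  have hp3c : Continuous (deriv (deriv (deriv (f1A R)))) := hp21.continuous_deriv le_rfl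
  have hRd : Differentiable ℝ R := hR.differentiable (by norm_num)
  have hdRd : Differentiable ℝ (deriv R) := hR3.differentiable (by norm_num)
  have hf1d : Differentiable ℝ (f1A R) := hf13.differentiable (by norm_num)
  have hp1d : Differentiable ℝ (deriv (f1A R)) := hp12.differentiable (by norm_num)
  have hp2d : Differentiable ℝ (deriv (deriv (f1A R))) := hp21.differentiable (by norm_num)
  have hp2c : Continuous (deriv (deriv (f1A R))) := hp21.continuous
  -- basic derivative facts
  have hYd : ∀ t, HasDerivAt (fun s => y (tn + s)) (R (y (tn + t))) t := by
    intro t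
    have h := (hy (tn + t)).comp t ((hasDerivAt_id t).const_add tn)
    simpa [Function.comp_def] using h
  have hYdiff : Differentiable ℝ (fun s => y (tn + s)) := fun t => (hYd t).differentiableAt
  have hzd : ∀ t, HasDerivAt (zA R (y tn)) (zpA R (y tn) t) t := by
    intro t
    unfold zA zpA
    have h := ((hasDerivAt_const t (y tn)).add
        (((hasDerivAt_id t).div_const 2).mul_const (R (y tn)))).add
      ((((hasDerivAt_pow 2 t)).div_const 8).mul_const (deriv R (y tn) * R (y tn)))
    refine h.congr_deriv ?_
    try simp only [id_eq]
    push_cast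
    ring
  have hcomp : ∀ (F : ℝ → ℝ), Differentiable ℝ F → ∀ t,
      HasDerivAt (fun s => F (zA R (y tn) s)) (deriv F (zA R (y tn) t) * zpA R (y tn) t) t := by
    intro F hF t
    exact ((hF (zA R (y tn) t)).hasDerivAt).comp t (hzd t)
  have hcompY : ∀ (F : ℝ → ℝ), Differentiable ℝ F → ∀ t,
      HasDerivAt (fun s => F (y (tn + s))) (deriv F (y (tn + t)) * R (y (tn + t))) t := by
    intro F hF t
    exact ((hF (y (tn + t))).hasDerivAt).comp t (hYd t)
  have hzpd : ∀ t, HasDerivAt (zpA R (y tn)) (deriv R (y tn) * R (y tn) / 4) t := by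
    intro t
    unfold zpA
    have h := (hasDerivAt_const t (R (y tn) / 2)).add
      (((hasDerivAt_id t).div_const 4).mul_const (deriv R (y tn) * R (y tn)))
    refine h.congr_deriv ?_
    try simp only [id_eq]
    ring
  have hgd : ∀ t, HasDerivAt (gA R (y tn)) (g1A R (y tn) t) t := fun t => hcomp (f1A R) hf1d t
  have hg1d : ∀ t, HasDerivAt (g1A R (y tn)) (g2A R (y tn) t) t := by
    intro t
    exact (hcomp (deriv (f1A R)) hp1d t).mul (hzpd t)
  have hg2d : ∀ t, HasDerivAt (g2A R (y tn)) (g3A R (y tn) t) t := by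
    intro t
    have h := (((hcomp (deriv (deriv (f1A R))) hp2d t).mul (hzpd t)).mul (hzpd t)).add
      ((hcomp (deriv (f1A R)) hp1d t).mul_const (deriv R (y tn) * R (y tn) / 4))
    refine h.congr_deriv ?_
    unfold g3A
    simp only [Pi.mul_apply]
    ring
  -- values at 0
  have hz0 : zA R (y tn) 0 = y tn := by unfold zA; ring
  have hzp0 : zpA R (y tn) 0 = R (y tn) / 2 := by unfold zpA; ring
  -- apply the chain lemma
  refine chain_bigO _ (E1A R y tn) (E2A R y tn) (E3A R y tn) (psiA R y tn) (chiA R y tn)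
    (g3A R (y tn)) ?_ ?_ ?_ ?_ (fun t => rfl) ?_ ?_ ?_ ?_ ?_ ?_ ?_
  · -- continuity of g3A
    have hzc : Continuous (zA R (y tn)) := by unfold zA; fun_prop
    have hzpc : Continuous (zpA R (y tn)) := by unfold zpA; fun_prop
    unfold g3A
    exact ((hp3c.comp hzc).mul (hzpc.pow 3)).add
      (continuous_const.mul ((hp2c.comp hzc).mul hzpc))
  · -- HasDerivAt E E1
    intro t
    have h := (hYd t).sub (((hasDerivAt_const t (y tn)).add
        ((hasDerivAt_id t).mul_const (R (y tn)))).add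
      (((hasDerivAt_pow 2 t).div_const 6).mul (((hgd t).const_mul 2).const_add
        (deriv R (y tn) * R (y tn)))))
    refine h.congr_deriv ?_
    unfold E1A
    try simp only [id_eq]
    push_cast
    ring
  · -- HasDerivAt E1 E2
    intro t
    have h := (hcompY R hRd t).sub
      ((((hasDerivAt_id t).div_const 3).mul (((hgd t).const_mul 2).const_add
          (deriv R (y tn) * R (y tn)))).const_add (R (y tn)) |>.add
        (((hasDerivAt_pow 2 t).div_const 3).mul (hg1d t)))
    refine h.congr_deriv ?_
    unfold E2A f1A
    try simp only [id_eq]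
    push_cast
    ring
  · -- HasDerivAt E2 E3
    intro t
    have h := (hcompY (f1A R) hf1d t).sub
      (((((hgd t).const_mul 2).const_add (deriv R (y tn) * R (y tn))).div_const 3).add
        ((((hasDerivAt_id t).const_mul 4).div_const 3).mul (hg1d t)) |>.add
        (((hasDerivAt_pow 2 t).div_const 3).mul (hg2d t)))
    refine h.congr_deriv ?_
    unfold E3A psiA
    try simp only [id_eq]
    push_cast
    ring
  · -- HasDerivAt psi (chi - 2*(t*g3))
    intro t
    have h := ((hcompY (deriv (f1A R)) hp1d t).mul (hcompY R hRd t)).sub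
      (((hg1d t).const_mul 2).add (((hasDerivAt_id t).const_mul 2).mul (hg2d t)))
    refine h.congr_deriv ?_
    unfold chiA
    try simp only [id_eq]
    ring
  · -- chi differentiable at 0
    have h : Differentiable ℝ (chiA R y tn) := by
      unfold chiA
      refine Differentiable.sub ?_ ?_
      · exact (((hp2d.comp hYdiff).mul (hRd.comp hYdiff)).mul (hRd.comp hYdiff)).add
          ((hp1d.comp hYdiff).mul ((hdRd.comp hYdiff).mul (hRd.comp hYdiff)))
      · exact fun t => ((hg2d t).differentiableAt.const_mul 4 : DifferentiableAt ℝ _ t)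
    exact h 0
  · -- E 0 = 0
    simp
  · -- E1 0 = 0
    unfold E1A
    simp
  · -- E2 0 = 0
    unfold E2A gA f1A
    rw [hz0]
    simp only [add_zero]
    ring
  · -- psi 0 = 0
    unfold psiA g1A
    rw [hz0, hzp0]
    simp only [add_zero]
    ring
  · -- chi 0 = 0
    unfold chiA g2A
    rw [hz0, hzp0]
    simp only [add_zero]
    ring
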